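/- Let T be an aperiodic Borel automorphism of a standard Borel space (X, 𝓑), let μ₁, …, μₖ be Borel probability measures on X, let ε > 0 and let n, m ≥ 2 be integers. Then there exist a countable family of pairwise disjoint Borel sets (B_j) and integers h_j > n + m such that the sets T^i(B_j), for 0 ≤ i < h_j and all j, are pairwise disjoint and their union is X, and for every l = 1, …, k one has μ_l( ⋃_j ( ⋃_{0 ≤ i < n} T^i(B_j) ∪ ⋃_{1 ≤ i ≤ m} T^{h_j − i}(B_j) ) ) < ε. (Rokhlin lemma: partition of X into T-towers of height greater than n + m whose first n and last m levels have total measure less than ε.) -/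

import Mathlib

open MeasureTheory Set
open scoped ENNReal

/-- `T` is a Borel automorphism: both `T` and its inverse are measurable. -/
def IsBorelAuto {X : Type*} [MeasurableSpace X] (T : Equiv.Perm X) : Prop :=
  Measurable T ∧ Measurable T.symm

/-- `T` is aperiodic: no point is periodic. -/
def IsAperiodic {X : Type*} (T : Equiv.Perm X) : Prop :=
  ∀ (x : X) (n : ℤ), n ≠ 0 → (T ^ n) x ≠ x

set_option linter.unusedSectionVars false

section RokhlinAux
namespace Rok
variable {X : Type*}

def Z (T : Equiv.Perm X) (t : ℤ) : X → X := ⇑(T ^ t)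

lemma Z_add (T : Equiv.Perm X) (a b : ℤ) (x : X) : Z T (a + b) x = Z T a (Z T b x) := by
  simp [Z, zpow_add, Equiv.Perm.mul_apply]

lemma Z_zero (T : Equiv.Perm X) (x : X) : Z T 0 x = x := by simp [Z]

lemma Z_neg_cancel (T : Equiv.Perm X) (t : ℤ) (x : X) : Z T (-t) (Z T t x) = x := by
  rw [← Z_add]; simp [Z]

lemma Z_inj (T : Equiv.Perm X) (t : ℤ) {x y : X} (h : Z T t x = Z T t y) : x = y := by
  have := congrArg (Z T (-t)) h
  simpa [Z_neg_cancel] using this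

lemma Z_natCast (T : Equiv.Perm X) (i : ℕ) : ⇑(T ^ i) = Z T (i : ℤ) := by
  simp [Z, zpow_natCast]

lemma Z_aperiodic {T : Equiv.Perm X} (hTa : IsAperiodic T) (x : X) {t : ℤ} (ht : t ≠ 0) :
    Z T t x ≠ x := hTa x t ht

variable [MeasurableSpace X]

lemma measurable_pow {T : Equiv.Perm X} (hT : Measurable T) (n : ℕ) :
    Measurable ⇑(T ^ n) := by
  induction n with
  | zero => simpa using measurable_id
  | succ k ih =>
    have : ⇑(T ^ (k+1)) = ⇑(T ^ k) ∘ ⇑T := by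
      ext x; simp [pow_succ, Equiv.Perm.mul_apply]
    rw [this]; exact ih.comp hT

lemma Z_measurable {T : Equiv.Perm X} (hT : IsBorelAuto T) (t : ℤ) :
    Measurable (Z T t) := by
  obtain ⟨h1, h2⟩ := hT
  cases t with
  | ofNat n => simpa [Z, zpow_natCast] using measurable_pow h1 n
  | negSucc n =>
    have : (T : Equiv.Perm X) ^ (Int.negSucc n) = (T⁻¹) ^ (n + 1) := by
      rw [zpow_negSucc, inv_pow]
    have h3 : Measurable ⇑(T⁻¹) := h2
    simpa [Z, this] using measurable_pow h3 (n + 1)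

lemma Z_image_eq_preimage (T : Equiv.Perm X) (t : ℤ) (S : Set X) :
    Z T t '' S = Z T (-t) ⁻¹' S := by
  ext x
  constructor
  · rintro ⟨y, hy, rfl⟩; simpa [Set.mem_preimage, Z_neg_cancel] using hy
  · intro hx
    exact ⟨Z T (-t) x, hx, by rw [← Z_add]; simp [Z_zero]⟩

lemma Z_image_measurable {T : Equiv.Perm X} (hT : IsBorelAuto T) (t : ℤ) {S : Set X}
    (hS : MeasurableSet S) : MeasurableSet (Z T t '' S) := by
  rw [Z_image_eq_preimage]; exact (Z_measurable hT (-t)) hS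

lemma Z_mem_image (T : Equiv.Perm X) (t : ℤ) (S : Set X) (x : X) :
    x ∈ Z T t '' S ↔ Z T (-t) x ∈ S := by
  rw [Z_image_eq_preimage]; rfl

def greedy (A : ℕ → Set X) (nb : Set X → Set X) : ℕ → Set X
  | i => A i \ ⋃ j : Fin i, nb (greedy A nb j)
decreasing_by exact j.isLt

lemma greedy_def (A : ℕ → Set X) (nb : Set X → Set X) (i : ℕ) :
    greedy A nb i = A i \ ⋃ j : Fin i, nb (greedy A nb j) := by
  rw [greedy]

/-- Existence of a measurable complete section with gaps `> N` and
within distance `N` of every point. -/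
lemma exists_section [StandardBorelSpace X] {T : Equiv.Perm X}
    (hT : IsBorelAuto T) (hTa : IsAperiodic T) (N : ℕ) :
    ∃ C : Set X, MeasurableSet C ∧
      (∀ x ∈ C, ∀ j : ℤ, 1 ≤ j → j ≤ (N : ℤ) → Z T j x ∉ C) ∧
      (∀ x : X, ∃ t : ℤ, |t| ≤ (N : ℤ) ∧ Z T t x ∈ C) := by
  -- separating family
  obtain ⟨V, hVmeas, hVsep⟩ :=
    exists_seq_separating X MeasurableSet.empty Set.univ
  set V' : ℕ × Bool → Set X := fun p => if p.2 then V p.1 else (V p.1)ᶜ with hV'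
  have hV'meas : ∀ p, MeasurableSet (V' p) := by
    intro p
    by_cases h : p.2 <;> simp [hV', h, hVmeas p.1, (hVmeas p.1).compl]
  have sep' : ∀ x y : X, x ≠ y → ∃ p, x ∈ V' p ∧ y ∉ V' p := by
    intro x y hxy
    by_contra h
    push_neg at h
    apply hxy
    refine hVsep x (mem_univ x) y (mem_univ y) fun n => ?_
    constructor
    · intro hx
      by_contra hy
      exact hy (h (n, true) (by simpa [hV'] using hx))
    · intro hy
      by_contra hx
      exact (h (n, false) (by simpa [hV'] using hx)) hy
  -- the basic marker sets
  set W : Finset (ℕ × Bool) → Set X := fun s => ⋂ p ∈ (s : Set (ℕ × Bool)), V' p with hW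
  have hWmeas : ∀ s, MeasurableSet (W s) := fun s =>
    MeasurableSet.biInter s.countable_toSet fun p _ => hV'meas p
  set M : Finset (ℕ × Bool) → Set X := fun s =>
    W s ∩ ⋂ j ∈ (Finset.Icc (1 : ℤ) N : Set ℤ), Z T j ⁻¹' (W s)ᶜ with hM
  have hMmeas : ∀ s, MeasurableSet (M s) := by
    intro s
    refine (hWmeas s).inter (MeasurableSet.biInter (Finset.Icc (1:ℤ) N).countable_toSet
      fun j _ => (Z_measurable hT j) (hWmeas s).compl)
  have hMdisc : ∀ s, ∀ x ∈ M s, ∀ j : ℤ, 1 ≤ j → j ≤ (N:ℤ) → Z T j x ∉ M s := by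
    intro s x hx j hj1 hjN hmem
    have h1 : Z T j x ∈ (W s)ᶜ := by
      have := hx.2
      simp only [Set.mem_iInter] at this
      exact this j (by simpa using ⟨hj1, hjN⟩)
    exact h1 hmem.1
  have hMcover : ∀ x : X, ∃ s, x ∈ M s := by
    intro x
    have hsep : ∀ j : ℤ, ∃ p, 1 ≤ j → j ≤ (N:ℤ) → x ∈ V' p ∧ Z T j x ∉ V' p := by
      intro j
      by_cases hj : 1 ≤ j ∧ j ≤ (N:ℤ)
      · have hne : x ≠ Z T j x :=
          fun h => Z_aperiodic hTa x (by omega : j ≠ 0) h.symm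
        obtain ⟨p, hp⟩ := sep' x (Z T j x) hne
        exact ⟨p, fun _ _ => hp⟩
      · exact ⟨(0, true), fun h1 h2 => absurd ⟨h1, h2⟩ hj⟩
    choose f hf using hsep
    set s : Finset (ℕ × Bool) := (Finset.Icc (1:ℤ) N).image f with hs
    have hxW : x ∈ W s := by
      simp only [hW, Set.mem_iInter]
      rintro p hp
      simp only [hs, Finset.coe_image, Set.mem_image, Finset.mem_coe, Finset.mem_Icc] at hp
      obtain ⟨j, ⟨hj1, hj2⟩, rfl⟩ := hp
      exact (hf j hj1 hj2).1
    refine ⟨s, hxW, ?_⟩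
    simp only [Set.mem_iInter]
    intro j hj
    simp only [Finset.mem_coe, Finset.mem_Icc] at hj
    intro hmem
    have : Z T j x ∉ V' (f j) := (hf j hj.1 hj.2).2
    apply this
    have : f j ∈ s := Finset.mem_image_of_mem f (Finset.mem_Icc.mpr hj)
    simp only [hW, Set.mem_iInter] at hmem
    exact hmem (f j) (by simpa using this)
  -- enumerate the marker sets
  obtain ⟨g, hg⟩ := exists_surjective_nat (Finset (ℕ × Bool))
  set nb : Set X → Set X := fun S => ⋃ t ∈ (Finset.Icc (-(N:ℤ)) N : Set ℤ), Z T t '' S with hnb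
  have hnbmeas : ∀ S : Set X, MeasurableSet S → MeasurableSet (nb S) := by
    intro S hS
    exact MeasurableSet.biUnion (Finset.Icc (-(N:ℤ)) N).countable_toSet
      fun t _ => Z_image_measurable hT t hS
  set G : ℕ → Set X := greedy (fun i => M (g i)) nb with hG
  have hGdef : ∀ i, G i = M (g i) \ ⋃ j : Fin i, nb (G j) := fun i => greedy_def _ _ i
  have hGmeas : ∀ i, MeasurableSet (G i) := by
    intro i
    induction i using Nat.strong_induction_on with
    | _ i ih =>
      rw [hGdef i]
      exact (hMmeas (g i)).diff
        (MeasurableSet.iUnion fun j => hnbmeas _ (ih j j.isLt))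
  have hGsub : ∀ i, G i ⊆ M (g i) := fun i => by rw [hGdef i]; exact Set.diff_subset
  refine ⟨⋃ i, G i, MeasurableSet.iUnion hGmeas, ?_, ?_⟩
  · -- gaps
    rintro x hx j hj1 hjN hmem
    simp only [Set.mem_iUnion] at hx hmem
    obtain ⟨a, ha⟩ := hx
    obtain ⟨b, hb⟩ := hmem
    have hnbj : Z T j x ∈ nb (G a) := by
      simp only [hnb, Set.mem_iUnion]
      exact ⟨j, by simp [Finset.mem_Icc]; omega, Set.mem_image_of_mem _ ha⟩
    have hnbx : x ∈ nb (G b) := by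
      simp only [hnb, Set.mem_iUnion]
      refine ⟨-j, by simp [Finset.mem_Icc]; omega, ?_⟩
      rw [Z_mem_image]
      simpa [Z_neg_cancel, neg_neg] using hb
    rcases lt_trichotomy a b with h | h | h
    · rw [hGdef b] at hb
      exact hb.2 (Set.mem_iUnion.mpr ⟨⟨a, h⟩, hnbj⟩)
    · subst h
      exact hMdisc (g a) x (hGsub a ha) j hj1 hjN (hGsub a hb)
    · rw [hGdef a] at ha
      exact ha.2 (Set.mem_iUnion.mpr ⟨⟨b, h⟩, hnbx⟩)
  · -- nearness
    intro x
    obtain ⟨s, hs⟩ := hMcover x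
    obtain ⟨i, rfl⟩ := hg s
    by_cases hx : x ∈ G i
    · exact ⟨0, by simp, Set.mem_iUnion.mpr ⟨i, by simpa [Z_zero] using hx⟩⟩
    · have : x ∈ ⋃ j : Fin i, nb (G j) := by
        rw [hGdef i] at hx
        by_contra h
        exact hx ⟨hs, h⟩
      simp only [Set.mem_iUnion, hnb] at this
      obtain ⟨j, t, ht, hmem⟩ := this
      simp only [Finset.mem_coe, Finset.mem_Icc] at ht
      refine ⟨-t, by rw [abs_neg, abs_le]; omega, ?_⟩
      rw [Z_mem_image] at hmem
      exact Set.mem_iUnion.mpr ⟨j, hmem⟩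

end Rok
end RokhlinAux

/-- Rokhlin lemma: partition of `X` into `T`-towers of height
greater than `n + m` whose first `n` and last `m` levels have small measure. -/
theorem rokhlin_lemma {X : Type*} [MeasurableSpace X] [StandardBorelSpace X]
    (T : Equiv.Perm X) (hT : IsBorelAuto T) (hTa : IsAperiodic T)
    (k : ℕ) (μ : Fin k → Measure X) (hμ : ∀ l, IsProbabilityMeasure (μ l))
    (ε : ℝ≥0∞) (hε : 0 < ε) (n m : ℕ) (hn : 2 ≤ n) (hm : 2 ≤ m) :
    ∃ (B : ℕ → Set X) (h : ℕ → ℕ),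
      (∀ j, MeasurableSet (B j)) ∧
      (∀ j, n + m < h j) ∧
      (∀ j i j' i', i < h j → i' < h j' → (j, i) ≠ (j', i') →
        Disjoint ((⇑(T ^ i)) '' B j) ((⇑(T ^ i')) '' B j')) ∧
      (⋃ j, ⋃ i ∈ Finset.range (h j), (⇑(T ^ i)) '' B j) = Set.univ ∧
      ∀ l, μ l (⋃ j, ((⋃ i ∈ Finset.range n, (⇑(T ^ i)) '' B j) ∪
          (⋃ i ∈ Finset.Icc 1 m, (⇑(T ^ (h j - i))) '' B j))) < ε := by
  classical
  -- a finite positive epsilon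
  set ε' : ℝ≥0∞ := min ε 1 with hε'def
  have hε'0 : ε' ≠ 0 := (lt_min hε zero_lt_one).ne'
  have hε'top : ε' ≠ ⊤ := ((min_le_right ε 1).trans_lt ENNReal.one_lt_top).ne
  have hε'le : ε' ≤ ε := min_le_left _ _
  obtain ⟨c, hc⟩ : ∃ c : ℕ, ((k * (n + m) : ℕ) : ℝ≥0∞) / ε' < c :=
    ENNReal.exists_nat_gt (ENNReal.div_lt_top (ENNReal.natCast_ne_top _) hε'0).ne
  have hc' : ((k * (n + m) : ℕ) : ℝ≥0∞) < c * ε' := by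
    rwa [ENNReal.div_lt_iff (Or.inl hε'0) (Or.inl hε'top)] at hc
  set N : ℕ := n + m + c + 1 with hNdef
  obtain ⟨C, hCmeas, hCgap, hCnear⟩ := Rok.exists_section hT hTa N
  -- translates of C are disjoint
  have hCdisj : ∀ s s' : ℤ, s < s' → s' - s ≤ (N : ℤ) →
      Disjoint (Rok.Z T s '' C) (Rok.Z T s' '' C) := by
    intro s s' hlt hle
    rw [Set.disjoint_left]
    intro x hx hx'
    rw [Rok.Z_mem_image] at hx hx'
    have h1 : Rok.Z T (s' - s) (Rok.Z T (-s') x) = Rok.Z T (-s) x := by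
      rw [← Rok.Z_add]; congr 1; ring
    exact hCgap _ hx' (s' - s) (by omega) hle (h1 ▸ hx)
  have hone : ∀ l : Fin k, ∑ s ∈ Finset.range N, μ l (Rok.Z T (s : ℤ) '' C) ≤ 1 := by
    intro l
    have hdisj : Set.PairwiseDisjoint ((Finset.range N : Finset ℕ) : Set ℕ)
        (fun s : ℕ => Rok.Z T (s : ℤ) '' C) := by
      intro a ha b hb hab
      simp only [Finset.coe_range, Set.mem_Iio] at ha hb
      rcases hab.lt_or_gt with hlt | hlt
      · exact hCdisj a b (by exact_mod_cast hlt) (by omega)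
      · exact (hCdisj b a (by exact_mod_cast hlt) (by omega)).symm
    calc ∑ s ∈ Finset.range N, μ l (Rok.Z T (s : ℤ) '' C)
        = μ l (⋃ s ∈ Finset.range N, Rok.Z T (s : ℤ) '' C) :=
          (measure_biUnion_finset hdisj fun b _ => Rok.Z_image_measurable hT _ hCmeas).symm
      _ ≤ μ l Set.univ := measure_mono (Set.subset_univ _)
      _ = 1 := measure_univ
  -- the "bad window" sets and their total masses
  set bad : ℕ → Set X := fun t =>
    ⋃ i ∈ Finset.range (n + m), Rok.Z T ((t : ℤ) - m + i) '' C with hbaddef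
  set F : ℕ → ℝ≥0∞ := fun t => ∑ l : Fin k, μ l (bad t) with hFdef
  have hFsum : ∑ t ∈ Finset.Icc m (N - n), F t ≤ ((k * (n + m) : ℕ) : ℝ≥0∞) := by
    have key : ∀ (l : Fin k) (i : ℕ), i ∈ Finset.range (n + m) →
        ∑ t ∈ Finset.Icc m (N - n), μ l (Rok.Z T ((t : ℤ) - m + i) '' C) ≤ 1 := by
      intro l i hi
      simp only [Finset.mem_range] at hi
      have hstep : ∑ t ∈ Finset.Icc m (N - n), μ l (Rok.Z T ((t : ℤ) - m + i) '' C)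
          = ∑ t ∈ Finset.Icc m (N - n), μ l (Rok.Z T ((t - m + i : ℕ) : ℤ) '' C) := by
        refine Finset.sum_congr rfl fun t ht => ?_
        simp only [Finset.mem_Icc] at ht
        have hcast : (t : ℤ) - m + i = ((t - m + i : ℕ) : ℤ) := by omega
        rw [hcast]
      rw [hstep]
      have himg : ∑ t ∈ Finset.Icc m (N - n), μ l (Rok.Z T ((t - m + i : ℕ) : ℤ) '' C)
          = ∑ s ∈ (Finset.Icc m (N - n)).image (fun t => t - m + i),
              μ l (Rok.Z T (s : ℤ) '' C) := by
        rw [Finset.sum_image]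
        intro a ha b hb hab
        simp only [Finset.mem_coe, Finset.mem_Icc] at ha hb hab
        omega
      rw [himg]
      refine le_trans (Finset.sum_le_sum_of_subset ?_) (hone l)
      intro s hs
      simp only [Finset.mem_image, Finset.mem_Icc] at hs
      simp only [Finset.mem_range]
      omega
    calc ∑ t ∈ Finset.Icc m (N - n), F t
        ≤ ∑ t ∈ Finset.Icc m (N - n), ∑ l : Fin k, ∑ i ∈ Finset.range (n + m),
            μ l (Rok.Z T ((t : ℤ) - m + i) '' C) := by
          refine Finset.sum_le_sum fun t _ => ?_
          simp only [hFdef, hbaddef]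
          exact Finset.sum_le_sum fun l _ => measure_biUnion_finset_le _ _
      _ = ∑ l : Fin k, ∑ t ∈ Finset.Icc m (N - n), ∑ i ∈ Finset.range (n + m),
            μ l (Rok.Z T ((t : ℤ) - m + i) '' C) := Finset.sum_comm
      _ = ∑ l : Fin k, ∑ i ∈ Finset.range (n + m), ∑ t ∈ Finset.Icc m (N - n),
            μ l (Rok.Z T ((t : ℤ) - m + i) '' C) := by
          exact Finset.sum_congr rfl fun l _ => Finset.sum_comm
      _ ≤ ∑ l : Fin k, ∑ i ∈ Finset.range (n + m), 1 := by
          exact Finset.sum_le_sum fun l _ => Finset.sum_le_sum fun i hi => key l i hi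
      _ = ((k * (n + m) : ℕ) : ℝ≥0∞) := by
          simp only [Finset.sum_const, Finset.card_range, Finset.card_univ, Fintype.card_fin,
            nsmul_eq_mul, mul_one]
          push_cast
          ring
  -- choose a good shift
  obtain ⟨t₀, ht₀, hFt₀⟩ : ∃ t₀ ∈ Finset.Icc m (N - n), F t₀ < ε' := by
    by_contra hcon
    push_neg at hcon
    have hcard : (Finset.Icc m (N - n)).card = c + 2 := by
      rw [Nat.card_Icc]; omega
    have h2 : (Finset.Icc m (N - n)).card • ε' ≤ ∑ t ∈ Finset.Icc m (N - n), F t :=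
      Finset.card_nsmul_le_sum _ _ _ hcon
    rw [hcard, nsmul_eq_mul] at h2
    have h3 : (c : ℝ≥0∞) * ε' ≤ ((c + 2 : ℕ) : ℝ≥0∞) * ε' :=
      mul_le_mul_left (by exact_mod_cast Nat.le_add_right c 2) _
    have : ((k * (n + m) : ℕ) : ℝ≥0∞) < ((k * (n + m) : ℕ) : ℝ≥0∞) := by
      calc ((k * (n + m) : ℕ) : ℝ≥0∞) < (c : ℝ≥0∞) * ε' := hc'
        _ ≤ ((c + 2 : ℕ) : ℝ≥0∞) * ε' := h3
        _ ≤ ∑ t ∈ Finset.Icc m (N - n), F t := by exact_mod_cast h2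
        _ ≤ _ := hFsum
    exact absurd this (lt_irrefl _)
  simp only [Finset.mem_Icc] at ht₀
  -- the base of the towers
  set t₀' : ℤ := (t₀ : ℤ) with ht₀'def
  set D : Set X := Rok.Z T t₀' '' C with hDdef
  have hDmeas : MeasurableSet D := Rok.Z_image_measurable hT _ hCmeas
  have hDmem : ∀ x, x ∈ D ↔ Rok.Z T (-t₀') x ∈ C := fun x => Rok.Z_mem_image T t₀' C x
  have hDgap : ∀ x ∈ D, ∀ j : ℤ, 1 ≤ j → j ≤ (N : ℤ) → Rok.Z T j x ∉ D := by
    intro x hx j h1 h2 hmem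
    rw [hDmem] at hx hmem
    have heq : Rok.Z T j (Rok.Z T (-t₀') x) = Rok.Z T (-t₀') (Rok.Z T j x) := by
      rw [← Rok.Z_add, ← Rok.Z_add, add_comm]
    exact hCgap _ hx j h1 h2 (heq ▸ hmem)
  have hDnear : ∀ x : X, ∃ t : ℤ, |t| ≤ (N : ℤ) ∧ Rok.Z T t x ∈ D := by
    intro x
    obtain ⟨s, hs, hmem⟩ := hCnear (Rok.Z T (-t₀') x)
    refine ⟨s, hs, ?_⟩
    rw [hDmem]
    have heq : Rok.Z T (-t₀') (Rok.Z T s x) = Rok.Z T s (Rok.Z T (-t₀') x) := by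
      rw [← Rok.Z_add, ← Rok.Z_add, add_comm]
    rw [heq]; exact hmem
  have hfwd : ∀ x : X, ∃ j : ℕ, 0 < j ∧ Rok.Z T (j : ℤ) x ∈ D := by
    intro x
    obtain ⟨s, hs, hmem⟩ := hDnear (Rok.Z T ((N : ℤ) + 1) x)
    rw [abs_le] at hs
    refine ⟨(s + N + 1).toNat, by omega, ?_⟩
    have heq : (((s + N + 1).toNat : ℤ)) = s + ((N : ℤ) + 1) := by omega
    rw [heq, Rok.Z_add]; exact hmem
  have hent : ∀ x : X, ∃ i : ℕ, Rok.Z T (-(i : ℤ)) x ∈ D := by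
    intro x
    obtain ⟨s, hs, hmem⟩ := hDnear (Rok.Z T (-(N : ℤ)) x)
    rw [abs_le] at hs
    refine ⟨(N - s).toNat, ?_⟩
    have heq : (-(((N - s).toNat : ℤ))) = s + -(N : ℤ) := by omega
    rw [heq, Rok.Z_add]; exact hmem
  set r : X → ℕ := fun x => Nat.find (hfwd x) with hrdef
  have hr_pos : ∀ x, 0 < r x := fun x => (Nat.find_spec (hfwd x)).1
  have hr_mem : ∀ x, Rok.Z T (r x : ℤ) x ∈ D := fun x => (Nat.find_spec (hfwd x)).2
  have hr_min : ∀ (x : X) (j : ℕ), 0 < j → Rok.Z T (j : ℤ) x ∈ D → r x ≤ j :=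
    fun x j h1 h2 => Nat.find_min' (hfwd x) (show 0 < j ∧ Rok.Z T (j : ℤ) x ∈ D from ⟨h1, h2⟩)
  set e : X → ℕ := fun x => Nat.find (hent x) with hedef
  have he_mem : ∀ x, Rok.Z T (-(e x : ℤ)) x ∈ D := fun x => Nat.find_spec (hent x)
  have he_min : ∀ (x : X) (i : ℕ), Rok.Z T (-(i : ℤ)) x ∈ D → e x ≤ i :=
    fun x i hmem => Nat.find_min' (hent x) hmem
  have hr_gtN : ∀ x ∈ D, N < r x := by
    intro x hx
    by_contra hcon
    push_neg at hcon
    refine hDgap x hx (r x) ?_ ?_ (hr_mem x)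
    · have := hr_pos x; omega
    · exact_mod_cast hcon
  -- the towers
  set B : ℕ → Set X := fun j =>
    if N < j then
      (D ∩ (Rok.Z T (j : ℤ) ⁻¹' D)) ∩ ⋂ i ∈ (Finset.Ico 1 j : Finset ℕ), (Rok.Z T (i : ℤ) ⁻¹' D)ᶜ
    else ∅ with hBdef
  set hh : ℕ → ℕ := fun j => if N < j then j else n + m + 1 with hhdef
  have hBmem : ∀ j x, x ∈ B j ↔ (N < j ∧ x ∈ D ∧ r x = j) := by
    intro j x
    simp only [hBdef]
    split_ifs with hNj
    · simp only [Set.mem_inter_iff, Set.mem_iInter, Set.mem_compl_iff, Set.mem_preimage,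
        Finset.mem_Ico]
      constructor
      · rintro ⟨⟨hxD, hxj⟩, hmin⟩
        refine ⟨hNj, hxD, ?_⟩
        have h1 : r x ≤ j := hr_min x j (by omega) hxj
        rcases eq_or_lt_of_le h1 with h2 | h2
        · exact h2
        · exact absurd (hr_mem x) (hmin (r x) ⟨hr_pos x, h2⟩)
      · rintro ⟨_, hxD, hrx⟩
        refine ⟨⟨hxD, hrx ▸ hr_mem x⟩, ?_⟩
        rintro i ⟨hi1, hi2⟩ hmem
        have := hr_min x i hi1 hmem
        omega
    · simp only [Set.mem_empty_iff_false, false_iff]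
      rintro ⟨hNj', _, _⟩
      exact hNj hNj'
  have hBmeas : ∀ j, MeasurableSet (B j) := by
    intro j
    simp only [hBdef]
    split_ifs with hNj
    · refine (hDmeas.inter ((Rok.Z_measurable hT _) hDmeas)).inter ?_
      exact MeasurableSet.biInter (Finset.Ico 1 j).countable_toSet
        fun i _ => ((Rok.Z_measurable hT _) hDmeas).compl
    · exact MeasurableSet.empty
  refine ⟨B, hh, hBmeas, ?_, ?_, ?_, ?_⟩
  · intro j
    simp only [hhdef]
    split_ifs with hNj <;> omega
  · -- disjointness
    intro j i j' i' hi hi' hne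
    rw [Rok.Z_natCast, Rok.Z_natCast, Set.disjoint_left]
    intro x hxa hxb
    have key : ∀ (a b a' b' : ℕ) (y : X), b < hh a → b' < hh a' → b < b' →
        y ∈ Rok.Z T (b : ℤ) '' B a → y ∈ Rok.Z T (b' : ℤ) '' B a' → False := by
      intro a b a' b' y hb hb' hlt hy hy'
      rw [Rok.Z_mem_image] at hy hy'
      have h1 := (hBmem a _).mp hy
      have h2 := (hBmem a' _).mp hy'
      have hha : hh a = a := by simp [hhdef, h1.1]
      have hha' : hh a' = a' := by simp [hhdef, h2.1]
      have hd : Rok.Z T ((b' - b : ℕ) : ℤ) (Rok.Z T (-(b' : ℤ)) y) = Rok.Z T (-(b : ℤ)) y := by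
        rw [← Rok.Z_add]; congr 1; omega
      have h3 : r (Rok.Z T (-(b' : ℤ)) y) ≤ b' - b := hr_min _ _ (by omega) (hd ▸ h1.2.1)
      have h4 := h2.2.2
      rw [hha'] at hb'
      omega
    rcases lt_trichotomy i i' with hlt | heq | hgt
    · exact key j i j' i' x hi hi' hlt hxa hxb
    · subst heq
      rw [Rok.Z_mem_image] at hxa hxb
      have h1 := ((hBmem j _).mp hxa).2.2
      have h2 := ((hBmem j' _).mp hxb).2.2
      exact hne (by rw [Prod.mk.injEq]; exact ⟨by omega, rfl⟩)
    · exact key j' i' j i x hi' hi hgt hxb hxa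
  · -- covering
    apply Set.eq_univ_of_forall
    intro x
    have hyD : Rok.Z T (-(e x : ℤ)) x ∈ D := he_mem x
    have hjN : N < r (Rok.Z T (-(e x : ℤ)) x) := hr_gtN _ hyD
    have hej : e x < r (Rok.Z T (-(e x : ℤ)) x) := by
      by_contra hle
      push_neg at hle
      have h1 : Rok.Z T (-((e x - r (Rok.Z T (-(e x : ℤ)) x) : ℕ) : ℤ)) x ∈ D := by
        have hmem : Rok.Z T ((r (Rok.Z T (-(e x : ℤ)) x) : ℤ)) (Rok.Z T (-(e x : ℤ)) x) ∈ D :=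
          hr_mem _
        have heq : Rok.Z T (-((e x - r (Rok.Z T (-(e x : ℤ)) x) : ℕ) : ℤ)) x
            = Rok.Z T ((r (Rok.Z T (-(e x : ℤ)) x) : ℤ)) (Rok.Z T (-(e x : ℤ)) x) := by
          rw [← Rok.Z_add]; congr 1; omega
        rw [heq]; exact hmem
      have h2 := he_min x _ h1
      omega
    refine Set.mem_iUnion.mpr ⟨r (Rok.Z T (-(e x : ℤ)) x), ?_⟩
    simp only [Set.mem_iUnion, Finset.mem_range]
    refine ⟨e x, ?_, ?_⟩
    · simp only [hhdef, hjN, if_true]; exact hej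
    · rw [Rok.Z_natCast, Rok.Z_mem_image, hBmem]
      exact ⟨hjN, hyD, rfl⟩
  · -- measure estimate
    intro l
    have hsub : (⋃ j, ((⋃ i ∈ Finset.range n, (⇑(T ^ i)) '' B j) ∪
        (⋃ i ∈ Finset.Icc 1 m, (⇑(T ^ (hh j - i))) '' B j))) ⊆ bad t₀ := by
      intro x hx
      simp only [Set.mem_iUnion, Set.mem_union] at hx
      obtain ⟨j, hx⟩ := hx
      simp only [hbaddef, Set.mem_iUnion, Finset.mem_range]
      rcases hx with hx | hx
      · simp only [Set.mem_iUnion, Finset.mem_range] at hx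
        obtain ⟨i, hin, hmem⟩ := hx
        rw [Rok.Z_natCast, Rok.Z_mem_image] at hmem
        have h1 := (hBmem j _).mp hmem
        refine ⟨m + i, by omega, ?_⟩
        rw [Rok.Z_mem_image]
        have heq : Rok.Z T (-((t₀ : ℤ) - m + ((m + i : ℕ) : ℤ))) x
            = Rok.Z T (-t₀') (Rok.Z T (-(i : ℤ)) x) := by
          rw [← Rok.Z_add]; congr 1; push_cast [ht₀'def]; ring
        rw [heq]
        exact (hDmem _).mp h1.2.1
      · simp only [Set.mem_iUnion, Finset.mem_Icc] at hx
        obtain ⟨i, hi, hmem⟩ := hx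
        rw [Rok.Z_natCast, Rok.Z_mem_image] at hmem
        have h1 := (hBmem j _).mp hmem
        have hNj : N < j := h1.1
        have hhj : hh j = j := by simp [hhdef, hNj]
        have hZj : Rok.Z T (j : ℤ) (Rok.Z T (-((hh j - i : ℕ) : ℤ)) x) ∈ D := by
          have := hr_mem (Rok.Z T (-((hh j - i : ℕ) : ℤ)) x)
          rwa [h1.2.2] at this
        refine ⟨m - i, by omega, ?_⟩
        rw [Rok.Z_mem_image]
        have heq : Rok.Z T (-((t₀ : ℤ) - m + ((m - i : ℕ) : ℤ))) x
            = Rok.Z T (-t₀') (Rok.Z T (j : ℤ) (Rok.Z T (-((hh j - i : ℕ) : ℤ)) x)) := by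
          rw [← Rok.Z_add, ← Rok.Z_add]; congr 1
          rw [hhj]
          simp only [ht₀'def]
          omega
        rw [heq]
        exact (hDmem _).mp hZj
    calc μ l (⋃ j, ((⋃ i ∈ Finset.range n, (⇑(T ^ i)) '' B j) ∪
        (⋃ i ∈ Finset.Icc 1 m, (⇑(T ^ (hh j - i))) '' B j)))
        ≤ μ l (bad t₀) := measure_mono hsub
      _ ≤ F t₀ := by
          simp only [hFdef]
          exact Finset.single_le_sum (f := fun l' : Fin k => μ l' (bad t₀))
            (fun _ _ => zero_le) (Finset.mem_univ l)
      _ < ε' := hFt₀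
      _ ≤ ε := hε'le
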